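/- arXiv:0804.1583 — 8 statements merged into one kernel-verified Lean document; each statement's English description precedes it below -/
import Mathlib

section
/- A topological group G is precompact if and only if for every nonempty open subset V of G there exists a finite subset F of G such that F·V·F = G. -/
open Pointwise Filter

attribute [local instance] Ultrafilter.mul Ultrafilter.semigroup

section UspenskijSolecki

variable {G : Type} [Group G]

private lemma mem_ultra_mul {p q : Ultrafilter G} {s : Set G} :
    s ∈ p * q ↔ {a : G | {b : G | a * b ∈ s} ∈ q} ∈ p := by
  have h := Ultrafilter.eventually_mul p q (· ∈ s)
  simpa only [Filter.eventually_iff, Ultrafilter.mem_coe, Set.setOf_mem_eq] using h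

private lemma ultra_inter {q : Ultrafilter G} {s t : Set G} (hs : s ∈ q) (ht : t ∈ q) :
    s ∩ t ∈ q := by
  have := Filter.inter_mem (Ultrafilter.mem_coe.mpr hs) (Ultrafilter.mem_coe.mpr ht)
  exact Ultrafilter.mem_coe.mp this

/-- Existence of a minimal closed left ideal in the Ellis semigroup `βG`. -/
private lemma exists_minimal_left_ideal (G : Type) [Group G] :
    ∃ M : Set (Ultrafilter G), IsClosed M ∧ (∀ q : Ultrafilter G, ∀ p ∈ M, q * p ∈ M) ∧
      M.Nonempty ∧
      ∀ C : Set (Ultrafilter G), C.Nonempty → IsClosed C →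
        (∀ q : Ultrafilter G, ∀ p ∈ C, q * p ∈ C) → C ⊆ M → C = M := by
  let S : Set (Set (Ultrafilter G)) :=
    {N | IsClosed N ∧ N.Nonempty ∧ ∀ q : Ultrafilter G, ∀ p ∈ N, q * p ∈ N}
  rsuffices ⟨N, hN⟩ : ∃ N, Minimal (· ∈ S) N
  · obtain ⟨Ncl, Nne, Nid⟩ := hN.prop
    exact ⟨N, Ncl, Nid, Nne, fun C hCne hCcl hCid hCsub =>
      hN.eq_of_subset ⟨hCcl, hCne, hCid⟩ hCsub⟩
  refine zorn_superset _ fun c hcs hc => ?_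
  refine ⟨⋂₀ c, ⟨isClosed_sInter fun t ht => (hcs ht).1, ?_, fun q p hp => ?_⟩,
    fun s hs => Set.sInter_subset_of_mem hs⟩
  · obtain rfl | hcnemp := c.eq_empty_or_nonempty
    · rw [Set.sInter_empty]
      exact ⟨pure 1, Set.mem_univ _⟩
    haveI := hcnemp.coe_sort
    convert IsCompact.nonempty_iInter_of_directed_nonempty_isCompact_isClosed
        ((↑) : c → Set (Ultrafilter G)) ?_ ?_ ?_ ?_
    · exact Set.sInter_eq_iInter
    · exact DirectedOn.directed_val (IsChain.directedOn hc.symm)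
    · exact fun i => (hcs i.prop).2.1
    · exact fun i => (hcs i.prop).1.isCompact
    · exact fun i => (hcs i.prop).1
  · rw [Set.mem_sInter]
    exact fun t ht => (hcs ht).2.2 q p (Set.mem_sInter.mp hp t ht)

/-- If `p` lies in a minimal closed left ideal of `βG` and `A ∈ p`, then the return set of `A`
is left syndetic. -/
private lemma minimal_syndetic {M : Set (Ultrafilter G)}
    (hMcl : IsClosed M)
    (hMid : ∀ q : Ultrafilter G, ∀ p ∈ M, q * p ∈ M)
    (hMmin : ∀ C : Set (Ultrafilter G), C.Nonempty → IsClosed C →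
        (∀ q : Ultrafilter G, ∀ p ∈ C, q * p ∈ C) → C ⊆ M → C = M)
    {p : Ultrafilter G} (hp : p ∈ M) {A : Set G} (hA : A ∈ p) :
    ∃ F : Finset G, ∀ h : G, ∃ f ∈ F, {x : G | (f⁻¹ * h) * x ∈ A} ∈ p := by
  classical
  by_contra hcon
  push_neg at hcon
  set B : Set G := {g : G | {x : G | g * x ∈ A} ∈ p} with hB
  -- Using the failure of syndeticity, find an ultrafilter `q` containing all sets
  -- `{x | g * x ∉ B}`.
  have hne : (⋂ g : G, {u : Ultrafilter G | {x : G | g * x ∉ B} ∈ u}).Nonempty := by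
    by_contra hempty
    rw [Set.not_nonempty_iff_eq_empty] at hempty
    obtain ⟨t, ht⟩ := IsCompact.elim_finite_subfamily_closed isCompact_univ
      (fun g : G => {u : Ultrafilter G | {x : G | g * x ∉ B} ∈ u})
      (fun g => ultrafilter_isClosed_basic _) (by rw [Set.univ_inter, hempty])
    obtain ⟨h, hh⟩ := hcon (t.image (·⁻¹))
    have hmem : (pure h : Ultrafilter G) ∈
        Set.univ ∩ ⋂ g ∈ t, {u : Ultrafilter G | {x : G | g * x ∉ B} ∈ u} := by
      refine ⟨Set.mem_univ _, ?_⟩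
      simp only [Set.mem_iInter, Set.mem_setOf_eq]
      intro g hg
      rw [Ultrafilter.mem_pure]
      have hgh := hh g⁻¹ (Finset.mem_image_of_mem _ hg)
      rw [inv_inv] at hgh
      simp only [Set.mem_setOf_eq]
      intro hcontra
      rw [hB, Set.mem_setOf_eq] at hcontra
      exact hgh hcontra
    rw [ht] at hmem
    exact hmem
  obtain ⟨q, hqmem⟩ := hne
  have hq : ∀ g : G, {x : G | g * x ∉ B} ∈ q := fun g => Set.mem_iInter.mp hqmem g
  -- Minimality: the orbit of `q * p` is all of `M`, so `p = r * (q * p)` for some `r`.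
  have hqpM : q * p ∈ M := hMid q p hp
  have hCeq : Set.range (fun r : Ultrafilter G => r * (q * p)) = M := by
    refine hMmin _ ⟨p * (q * p), p, rfl⟩
      ((isCompact_range (Ultrafilter.continuous_mul_left (q * p))).isClosed) ?_ ?_
    · rintro s _ ⟨r, rfl⟩
      exact ⟨s * r, by dsimp only; exact mul_assoc s r (q * p)⟩
    · rintro _ ⟨r, rfl⟩
      exact hMid r _ hqpM
  obtain ⟨r, hr⟩ : ∃ r : Ultrafilter G, r * (q * p) = p := by
    have : p ∈ Set.range (fun r : Ultrafilter G => r * (q * p)) := by rw [hCeq]; exact hp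
    exact this
  have hrp : (r * q) * p = p := by rw [mul_assoc]; exact hr
  have hBrq : B ∈ r * q := by
    have hA' : A ∈ (r * q) * p := by rw [hrp]; exact hA
    have := mem_ultra_mul.mp hA'
    rwa [← hB] at this
  have hr' : {a : G | {b : G | a * b ∈ B} ∈ q} ∈ r := mem_ultra_mul.mp hBrq
  obtain ⟨x, hx⟩ := Ultrafilter.nonempty_of_mem hr'
  have h1 : {b : G | x * b ∈ B} ∈ q := hx
  have h2 : {b : G | x * b ∉ B} ∈ q := hq x
  obtain ⟨b, hb1, hb2⟩ := Ultrafilter.nonempty_of_mem (ultra_inter h1 h2)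
  exact hb2 hb1

end UspenskijSolecki

/-- A topological group is precompact if every neighbourhood `V` of the identity
admits a finite set `F` with `F * V = G`. -/
def IsPrecompactGroup (G : Type*) [Group G] [TopologicalSpace G] : Prop :=
  ∀ V ∈ nhds (1 : G), ∃ F : Finset G, (F : Set G) * V = Set.univ

/-- Uspenskij–Solecki criterion: a topological group `G` is precompact if and only if
for every nonempty open `V ⊆ G` there is a finite `F` with `F * V * F = G`. -/
theorem statement2 (G : Type) [Group G] [TopologicalSpace G] [IsTopologicalGroup G] :
    IsPrecompactGroup G ↔
      ∀ V : Set G, IsOpen V → V.Nonempty →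
        ∃ F : Finset G, (F : Set G) * V * (F : Set G) = Set.univ := by
  constructor
  · -- easy direction
    intro hP V Vopen hVne
    obtain ⟨v, hv⟩ := hVne
    classical
    have hmem : v⁻¹ • V ∈ nhds (1 : G) := by
      refine (Vopen.smul v⁻¹).mem_nhds ?_
      exact ⟨v, hv, by simp [smul_eq_mul]⟩
    obtain ⟨F, hF⟩ := hP _ hmem
    refine ⟨F.image (· * v⁻¹) ∪ {1}, ?_⟩
    rw [Set.eq_univ_iff_forall]
    intro g
    have hg : g ∈ (F : Set G) * (v⁻¹ • V) := by rw [hF]; exact Set.mem_univ _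
    obtain ⟨f, hf, y, hy, hfy⟩ := Set.mem_mul.mp hg
    obtain ⟨x, hx, rfl⟩ := hy
    have hmem1 : f * v⁻¹ ∈ ((F.image (· * v⁻¹) ∪ {1} : Finset G) : Set G) := by
      simp only [Finset.coe_union, Set.mem_union, Finset.coe_image, Set.mem_image,
        Finset.mem_coe]
      exact Or.inl ⟨f, hf, rfl⟩
    have hmem2 : (1 : G) ∈ ((F.image (· * v⁻¹) ∪ {1} : Finset G) : Set G) := by
      simp
    refine Set.mem_mul.mpr ⟨(f * v⁻¹) * x, ?_, 1, hmem2, ?_⟩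
    · exact Set.mem_mul.mpr ⟨f * v⁻¹, hmem1, x, hx, rfl⟩
    · rw [← hfy]
      simp [smul_eq_mul, mul_assoc]
  · -- Uspenskij–Solecki direction
    intro hC U hU
    classical
    obtain ⟨V, Vopen, V1, hVU⟩ := exists_open_nhds_one_mul_subset hU
    set W : Set G := V ∩ V⁻¹ with hWdef
    have Wopen : IsOpen W := Vopen.inter Vopen.inv
    have W1 : (1 : G) ∈ W := ⟨V1, by simpa using V1⟩
    obtain ⟨F, hF⟩ := hC W Wopen ⟨1, W1⟩
    obtain ⟨M, Mcl, Mid, ⟨p, hp⟩, Mmin⟩ := exists_minimal_left_ideal G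
    have hdec : ((F : Set G) * W * (F : Set G)) =
        ⋃ a ∈ (F : Set G), ⋃ b ∈ (F : Set G), (fun v => a * v * b) '' W := by
      ext x
      simp only [Set.mem_mul, Set.mem_iUnion, Set.mem_image, Finset.mem_coe]
      constructor
      · rintro ⟨y, ⟨a, ha, v, hv, rfl⟩, c, hc, rfl⟩
        exact ⟨a, ha, c, hc, v, hv, rfl⟩
      · rintro ⟨a, ha, c, hc, v, hv, rfl⟩
        exact ⟨a * v, ⟨a, ha, v, hv, rfl⟩, c, hc, rfl⟩
    have huniv : ((F : Set G) * W * (F : Set G)) ∈ p := by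
      rw [hF]; exact Filter.univ_mem
    rw [hdec, Ultrafilter.finite_biUnion_mem_iff F.finite_toSet] at huniv
    obtain ⟨a, haF, huniv⟩ := huniv
    rw [Ultrafilter.finite_biUnion_mem_iff F.finite_toSet] at huniv
    obtain ⟨c, hcF, hA⟩ := huniv
    obtain ⟨F₁, hF₁⟩ := minimal_syndetic Mcl Mid Mmin hp hA
    refine ⟨F₁.image (· * a), ?_⟩
    rw [Set.eq_univ_iff_forall]
    intro g
    obtain ⟨f, hf, hfp⟩ := hF₁ (g * a⁻¹)
    obtain ⟨y, hyA, hyP⟩ := Ultrafilter.nonempty_of_mem (ultra_inter hA hfp)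
    obtain ⟨v, hv, rfl⟩ := hyA
    have hyP' : (f⁻¹ * (g * a⁻¹)) * (a * v * c) ∈ (fun v => a * v * c) '' W := hyP
    obtain ⟨v', hv', heq⟩ := hyP'
    -- solve for g
    have heq' : a * v' * c = (f⁻¹ * (g * a⁻¹)) * (a * v * c) := heq
    have h3 : a * v' * c = (f⁻¹ * g * v) * c := by
      rw [heq']; group
    have h4 : a * v' = f⁻¹ * g * v := mul_right_cancel h3
    have hg : g = (f * a) * (v' * v⁻¹) := by
      have h5 : a * v' * v⁻¹ = f⁻¹ * g := by rw [h4]; group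
      calc g = f * (f⁻¹ * g) := by group
        _ = f * (a * v' * v⁻¹) := by rw [h5]
        _ = (f * a) * (v' * v⁻¹) := by group
    have hUmem : v' * v⁻¹ ∈ U := hVU (Set.mul_mem_mul hv'.1 (Set.mem_inv.mp hv.2))
    refine Set.mem_mul.mpr ⟨f * a, ?_, v' * v⁻¹, hUmem, hg.symm⟩
    simp only [Finset.coe_image, Set.mem_image, Finset.mem_coe]
    exact ⟨f, hf, rfl⟩
end

section
/- Let G be a precompact topological group acting continuously by affine isometries on a real Banach space E. Then G admits a fixed point: there exists ξ ∈ E such that g·ξ = ξ for all g ∈ G. -/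
open Pointwise

/-- A jointly continuous action of `G` on a metric space by bijective isometries
(on a real Banach space, every such isometry is automatically affine by Mazur–Ulam). -/
def IsContIsometricAction {G X : Type*} [Group G] [TopologicalSpace G] [MetricSpace X]
    (act : G → X → X) : Prop :=
  (∀ g, Isometry (act g)) ∧ (∀ g, Function.Bijective (act g)) ∧
    (∀ x, act 1 x = x) ∧ (∀ g h x, act (g * h) x = act g (act h x)) ∧
    Continuous fun p : G × X => act p.1 p.2

/-- Chebyshev-type centre: a compact convex set of positive diameter contains a point
whose distance to every point of the set is at most some `r` strictly less than the diameter. -/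
lemma exists_center {E : Type} [NormedAddCommGroup E] [NormedSpace ℝ E]
    {M : Set E} (hne : M.Nonempty) (hconv : Convex ℝ M) (hcomp : IsCompact M)
    (hd : 0 < Metric.diam M) :
    ∃ c ∈ M, ∃ r, r < Metric.diam M ∧ ∀ y ∈ M, dist c y ≤ r := by
  classical
  set d := Metric.diam M with hd_def
  obtain ⟨t, htM, htfin, hcov⟩ := totallyBounded_iff_subset.1 hcomp.totallyBounded
    {p : E × E | dist p.1 p.2 < d / 2} (Metric.dist_mem_uniformity (by linarith))
  set s : Finset E := htfin.toFinset with hs_def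
  have hsM : ∀ x ∈ s, x ∈ M := fun x hx => htM (htfin.mem_toFinset.1 hx)
  obtain ⟨a, haM⟩ := hne
  have hsne : s.Nonempty := by
    obtain ⟨y, hy, _⟩ := Set.mem_iUnion₂.1 (hcov haM)
    exact ⟨y, htfin.mem_toFinset.2 hy⟩
  set n : ℕ := s.card with hn_def
  have hn1 : 1 ≤ n := Finset.card_pos.2 hsne
  have hnpos : (0:ℝ) < n := by exact_mod_cast Nat.lt_of_lt_of_le Nat.zero_lt_one hn1
  set c : E := ∑ x ∈ s, (n:ℝ)⁻¹ • x with hc_def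
  have hcM : c ∈ M := by
    apply hconv.sum_mem (fun i _ => by positivity) _ hsM
    rw [Finset.sum_const, nsmul_eq_mul]
    field_simp
    rfl
  refine ⟨c, hcM, (n:ℝ)⁻¹ * (d / 2 + (n - 1) * d), ?_, ?_⟩
  · rw [inv_mul_lt_iff₀ hnpos]
    have h1n : (1:ℝ) ≤ n := by exact_mod_cast hn1
    nlinarith
  · intro y hy
    obtain ⟨x₀, hx₀t, hx₀⟩ := Set.mem_iUnion₂.1 (hcov hy)
    have hx₀s : x₀ ∈ s := htfin.mem_toFinset.2 hx₀t
    have key : c - y = ∑ x ∈ s, (n:ℝ)⁻¹ • (x - y) := by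
      have h1 : ∑ x ∈ s, (n:ℝ)⁻¹ • (x - y) = c - ∑ _x ∈ s, (n:ℝ)⁻¹ • y := by
        simp [smul_sub, Finset.sum_sub_distrib, hc_def]
      rw [h1, Finset.sum_const]
      congr 1
      rw [← Nat.cast_smul_eq_nsmul ℝ, smul_smul]
      rw [mul_inv_cancel₀ (ne_of_gt hnpos), one_smul]
    have hdist : ∀ x ∈ s, ‖x - y‖ ≤ d := by
      intro x hx
      rw [← dist_eq_norm]
      exact Metric.dist_le_diam_of_mem hcomp.isBounded (hsM x hx) hy
    have hsum : ∑ x ∈ s, ‖x - y‖ ≤ d / 2 + (n - 1) * d := by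
      rw [← Finset.sum_erase_add _ _ hx₀s]
      have h1 : ‖x₀ - y‖ ≤ d / 2 := by
        rw [← dist_eq_norm, dist_comm]
        exact le_of_lt hx₀
      have h2 : ∑ x ∈ s.erase x₀, ‖x - y‖ ≤ (n - 1) * d := by
        calc ∑ x ∈ s.erase x₀, ‖x - y‖ ≤ ∑ _x ∈ s.erase x₀, d :=
              Finset.sum_le_sum fun x hx => hdist x (Finset.mem_of_mem_erase hx)
          _ = ((s.erase x₀).card : ℝ) * d := by rw [Finset.sum_const, nsmul_eq_mul]
          _ ≤ (n - 1) * d := by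
              rw [Finset.card_erase_of_mem hx₀s]
              have : ((n - 1 : ℕ) : ℝ) = (n : ℝ) - 1 := by
                push_cast [Nat.cast_sub hn1]; ring
              rw [this]
      linarith
    calc dist c y = ‖c - y‖ := dist_eq_norm _ _
      _ = ‖∑ x ∈ s, (n:ℝ)⁻¹ • (x - y)‖ := by rw [key]
      _ ≤ ∑ x ∈ s, ‖(n:ℝ)⁻¹ • (x - y)‖ := norm_sum_le _ _
      _ = (n:ℝ)⁻¹ * ∑ x ∈ s, ‖x - y‖ := by
          rw [Finset.mul_sum]
          exact Finset.sum_congr rfl fun x _ => by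
            rw [norm_smul, Real.norm_eq_abs, abs_of_pos (by positivity)]
      _ ≤ (n:ℝ)⁻¹ * (d / 2 + (n - 1) * d) := by
          apply mul_le_mul_of_nonneg_left hsum (by positivity)

/-- Every continuous affine isometric action of a precompact topological group on a real
Banach space has a fixed point. -/
theorem statement3 {G E : Type} [Group G] [TopologicalSpace G] [IsTopologicalGroup G]
    [NormedAddCommGroup E] [NormedSpace ℝ E] [CompleteSpace E]
    (hpre : IsPrecompactGroup G)
    (act : G → E → E) (hact : IsContIsometricAction act) :
    ∃ ξ : E, ∀ g : G, act g ξ = ξ := by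
  obtain ⟨hiso, hbij, hone, hmul, hcont⟩ := hact
  -- basic cancellation facts
  have hcancel : ∀ g x, act g (act g⁻¹ x) = x := by
    intro g x
    rw [← hmul, mul_inv_cancel, hone]
  have hcancel' : ∀ g x, act g⁻¹ (act g x) = x := by
    intro g x
    rw [← hmul, inv_mul_cancel, hone]
  -- the orbit of 0
  set O : Set E := Set.range fun g => act g 0 with hO_def
  have hOne : O.Nonempty := ⟨act 1 0, 1, rfl⟩
  -- the orbit is invariant
  have hOinv : ∀ g, act g '' O = O := by
    intro g
    apply Set.eq_of_subset_of_subset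
    · rintro _ ⟨_, ⟨h, rfl⟩, rfl⟩
      exact ⟨g * h, hmul g h 0⟩
    · rintro _ ⟨h, rfl⟩
      exact ⟨act (g⁻¹ * h) 0, ⟨g⁻¹ * h, rfl⟩, by rw [← hmul, mul_inv_cancel_left]⟩
  -- the orbit is totally bounded
  have hOtb : TotallyBounded O := by
    rw [Metric.totallyBounded_iff]
    intro ε hε
    have hco : Continuous fun g : G => act g 0 :=
      hcont.comp (continuous_id.prodMk continuous_const)
    have hV : (fun g : G => act g 0) ⁻¹' Metric.ball 0 ε ∈ nhds (1 : G) := by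
      apply hco.continuousAt.preimage_mem_nhds
      rw [hone]
      exact Metric.ball_mem_nhds _ hε
    obtain ⟨F, hF⟩ := hpre _ hV
    refine ⟨(fun f => act f 0) '' ↑F, (F.finite_toSet.image _), ?_⟩
    rintro _ ⟨g, rfl⟩
    have hg : g ∈ (F : Set G) * ((fun g : G => act g 0) ⁻¹' Metric.ball 0 ε) := by
      rw [hF]; trivial
    obtain ⟨f, hf, v, hv, rfl⟩ := hg
    refine Set.mem_iUnion₂.2 ⟨act f 0, ⟨f, hf, rfl⟩, ?_⟩
    show dist (act (f * v) 0) (act f 0) < ε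
    rw [hmul, (hiso f).dist_eq]
    simpa using hv
  -- the isometries as affine maps
  have haff : ∀ g (S : Set E), act g '' convexHull ℝ S = convexHull ℝ (act g '' S) := by
    intro g S
    let e : E ≃ᵢ E := ⟨Equiv.ofBijective _ (hbij g), hiso g⟩
    have he : ⇑e.toRealAffineIsometryEquiv.toAffineEquiv.toAffineMap = act g := by
      ext x
      simp [IsometryEquiv.coeFn_toRealAffineIsometryEquiv, e]
      rfl
    rw [← he, AffineMap.image_convexHull]
  have hclos : ∀ g (S : Set E), act g '' closure S = closure (act g '' S) := by
    intro g S
    let e : E ≃ᵢ E := ⟨Equiv.ofBijective _ (hbij g), hiso g⟩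
    exact e.toHomeomorph.image_closure S
  -- the closed convex hull of the orbit
  set K : Set E := closure (convexHull ℝ O) with hK_def
  have hKcomp : IsCompact K := TotallyBounded.isCompact_of_isClosed
    (totallyBounded_convexHull.2 hOtb).closure isClosed_closure
  have hKconv : Convex ℝ K := (convex_convexHull ℝ O).closure
  have hKne : K.Nonempty := hOne.mono ((subset_convexHull ℝ O).trans subset_closure)
  have hKinv : ∀ g, act g '' K = K := by
    intro g
    rw [hK_def, hclos, haff, hOinv]
  -- Zorn's lemma on nonempty compact convex invariant sets
  set S : Set (Set E) :=
    {M | M.Nonempty ∧ IsCompact M ∧ Convex ℝ M ∧ ∀ g, act g '' M = M} with hS_def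
  have hchains : ∀ c ⊆ S, IsChain (· ⊆ ·) c → c.Nonempty → ∃ lb ∈ S, ∀ s ∈ c, lb ⊆ s := by
    intro c hcS hchain hcne
    haveI : Nonempty c := hcne.to_subtype
    have hdir : Directed (· ⊇ ·) (fun s : c => (s : Set E)) := by
      have h : DirectedOn (· ⊇ ·) c := by
        intro x hx y hy
        rcases hchain.total hx hy with h | h
        · exact ⟨x, hx, le_refl _, h⟩
        · exact ⟨y, hy, h, le_refl _⟩
      exact h.directed_val
    have hmem : ∀ s : c, (s : Set E) ∈ S := fun s => hcS s.2
    refine ⟨⋂ s : c, (s : Set E), ⟨?_, ?_, ?_, ?_⟩, fun s hs => Set.iInter_subset (fun s : c => (s : Set E)) ⟨s, hs⟩⟩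
    · exact IsCompact.nonempty_iInter_of_directed_nonempty_isCompact_isClosed _ hdir
        (fun s => (hmem s).1) (fun s => (hmem s).2.1) (fun s => (hmem s).2.1.isClosed)
    · exact IsCompact.of_isClosed_subset (hmem (Classical.arbitrary c)).2.1
        (isClosed_iInter fun s => (hmem s).2.1.isClosed)
        (Set.iInter_subset _ (Classical.arbitrary c))
    · exact convex_iInter fun s => (hmem s).2.2.1
    · intro g
      rw [Set.image_iInter (hbij g)]
      exact Set.iInter_congr fun s => (hmem s).2.2.2 g
  obtain ⟨M, -, hMmin⟩ := zorn_superset_nonempty S hchains K ⟨hKne, hKcomp, hKconv, hKinv⟩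
  obtain ⟨⟨hMne, hMcomp, hMconv, hMinv⟩, hmin⟩ := hMmin
  -- M is a singleton
  obtain ⟨ξ, hξM⟩ := hMne
  rcases eq_or_lt_of_le (Metric.diam_nonneg (s := M)) with hdiam | hdiam
  · -- diameter zero: ξ is a fixed point
    refine ⟨ξ, fun g => ?_⟩
    have h1 : act g ξ ∈ M := by
      rw [← hMinv g]; exact ⟨ξ, hξM, rfl⟩
    have := Metric.dist_le_diam_of_mem hMcomp.isBounded h1 hξM
    rw [← hdiam] at this
    have : dist (act g ξ) ξ = 0 := le_antisymm this dist_nonneg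
    exact dist_eq_zero.1 this
  · -- positive diameter: contradict minimality using the centre
    exfalso
    obtain ⟨c, hcM, r, hr, hcr⟩ := exists_center ⟨ξ, hξM⟩ hMconv hMcomp hdiam
    have hr0 : 0 ≤ r := le_trans (by simpa using hcr c hcM) (le_refl r)
    set C : Set E := {x ∈ M | ∀ y ∈ M, dist x y ≤ r} with hC_def
    have hCM : C ⊆ M := fun x hx => hx.1
    have hCS : C ∈ S := by
      refine ⟨⟨c, hcM, hcr⟩, ?_, ?_, ?_⟩
      · -- compact
        have : C = M ∩ ⋂ y ∈ M, Metric.closedBall y r := by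
          ext x
          simp [hC_def, Set.mem_iInter, Metric.mem_closedBall, and_comm]
        rw [this]
        exact hMcomp.inter_right (isClosed_biInter fun y _ => Metric.isClosed_closedBall)
      · -- convex
        have : C = M ∩ ⋂ y ∈ M, Metric.closedBall y r := by
          ext x
          simp [hC_def, Set.mem_iInter, Metric.mem_closedBall, and_comm]
        rw [this]
        exact hMconv.inter (convex_iInter fun y => convex_iInter fun _ => convex_closedBall y r)
      · -- invariant
        intro g
        apply Set.eq_of_subset_of_subset
        · rintro _ ⟨x, ⟨hxM, hx⟩, rfl⟩
          refine ⟨by rw [← hMinv g]; exact ⟨x, hxM, rfl⟩, ?_⟩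
          intro y hy
          obtain ⟨y', hy', rfl⟩ := by rw [← hMinv g] at hy; exact hy
          rw [(hiso g).dist_eq]
          exact hx y' hy'
        · intro x hx
          refine ⟨act g⁻¹ x, ⟨?_, ?_⟩, hcancel g x⟩
          · rw [← hMinv g⁻¹]; exact ⟨x, hx.1, rfl⟩
          · intro y hy
            have : act g y ∈ M := by rw [← hMinv g]; exact ⟨y, hy, rfl⟩
            have h2 := hx.2 _ this
            rwa [← (hiso g⁻¹).dist_eq, hcancel'] at h2
    -- C is a proper subset, contradiction
    have hMC : M ⊆ C := hmin hCS hCM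
    obtain ⟨x, hxM, y, hyM, hxy⟩ : ∃ x ∈ M, ∃ y ∈ M, r < dist x y := by
      by_contra h
      push_neg at h
      exact absurd (Metric.diam_le_of_forall_dist_le hr0 h) (not_le.2 hr)
    exact absurd ((hMC hxM).2 y hyM) (not_le.2 hxy)
end

section
/- Let G be a topological group, E a reflexive real Banach space, and π a strongly continuous representation of G by bijective linear isometries of E (i.e., π : G → GL(E) is a group homomorphism into bijective linear isometries such that each orbit map g ↦ π(g)ξ is continuous). Then for every ξ ∈ E and every bounded linear functional φ ∈ E', the matrix coefficient g ↦ φ(π(g)ξ) is a weakly almost periodic function on G. -/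
open BoundedContinuousFunction

/-- A bounded continuous real-valued function on a topological group is weakly almost
periodic if the set of its left translates is relatively compact in the weak topology
of the Banach space of bounded continuous functions. -/
def IsWAP {G : Type*} [Group G] [TopologicalSpace G] [IsTopologicalGroup G] (f : G →ᵇ ℝ) : Prop :=
  IsCompact (closure
    (toWeakSpace ℝ (G →ᵇ ℝ) ''
      {h : G →ᵇ ℝ | ∃ g : G, h = f.compContinuous
        (⟨fun x => g * x, continuous_const.mul continuous_id⟩ : C(G, G))}))

/-- The weak topology on a normed space is Hausdorff. -/
theorem weakSpace_t2 {F : Type} [NormedAddCommGroup F] [NormedSpace ℝ F] :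
    T2Space (WeakSpace ℝ F) := by
  apply T2Space.of_injective_continuous (f := fun x : WeakSpace ℝ F => fun Φ : F →L[ℝ] ℝ => Φ x)
  · intro x y hxy
    have : ((toWeakSpace ℝ F).symm x : F) = (toWeakSpace ℝ F).symm y :=
      (NormedSpace.eq_iff_forall_dual_eq ℝ).2 fun g => congrFun hxy g
    exact (toWeakSpace ℝ F).symm.injective this
  · exact continuous_pi fun Φ => WeakBilin.eval_continuous _ Φ

/-- Matrix coefficients of a strongly continuous representation of a topological group by
bijective linear isometries of a reflexive real Banach space are weakly almost periodic. -/
theorem statement7 {G : Type} [Group G] [TopologicalSpace G] [IsTopologicalGroup G]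
    {E : Type} [NormedAddCommGroup E] [NormedSpace ℝ E] [CompleteSpace E]
    (hrefl : Function.Surjective (NormedSpace.inclusionInDoubleDual ℝ E))
    (π : G → (E ≃ₗᵢ[ℝ] E))
    (hone : π 1 = LinearIsometryEquiv.refl ℝ E)
    (hmul : ∀ g h : G, π (g * h) = (π h).trans (π g))
    (hcont : ∀ ξ : E, Continuous fun g : G => π g ξ) :
    ∀ (ξ : E) (φ : E →L[ℝ] ℝ),
      ∃ F : G →ᵇ ℝ, (∀ g : G, F g = φ (π g ξ)) ∧ IsWAP F := by
  intro ξ φ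
  -- The operator `T : E' → C_b(G)`, `T ψ = (x ↦ ψ (π x ξ))`.
  have hTbc : ∀ ψ : E →L[ℝ] ℝ, ∀ x : G, ‖ψ (π x ξ)‖ ≤ ‖ψ‖ * ‖ξ‖ := by
    intro ψ x
    calc ‖ψ (π x ξ)‖ ≤ ‖ψ‖ * ‖(π x) ξ‖ := ψ.le_opNorm _
    _ = ‖ψ‖ * ‖ξ‖ := by rw [(π x).norm_map]
  let T0 : (E →L[ℝ] ℝ) → (G →ᵇ ℝ) := fun ψ =>
    BoundedContinuousFunction.ofNormedAddCommGroup (fun x => ψ (π x ξ))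
      (ψ.continuous.comp (hcont ξ)) (‖ψ‖ * ‖ξ‖) (hTbc ψ)
  have hT0 : ∀ ψ x, T0 ψ x = ψ (π x ξ) := fun ψ x => rfl
  let T : (E →L[ℝ] ℝ) →L[ℝ] (G →ᵇ ℝ) :=
    LinearMap.mkContinuous
      { toFun := T0
        map_add' := fun ψ₁ ψ₂ => by ext x; simp [hT0]
        map_smul' := fun c ψ => by ext x; simp [hT0] } ‖ξ‖ (by
      intro ψ
      apply BoundedContinuousFunction.norm_le_of_nonempty.mpr
      · intro x
        calc ‖T0 ψ x‖ ≤ ‖ψ‖ * ‖ξ‖ := hTbc ψ x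
        _ = ‖ξ‖ * ‖ψ‖ := mul_comm _ _)
  -- `T` is continuous from the weak-* topology to the weak topology, by reflexivity.
  have hTw : Continuous fun ψ : WeakDual ℝ E =>
      toWeakSpace ℝ (G →ᵇ ℝ) (T (WeakDual.toStrongDual ψ)) := by
    apply WeakBilin.continuous_of_continuous_eval
    intro Φ
    obtain ⟨η, hη⟩ := hrefl (Φ.comp T)
    have : ∀ ψ : WeakDual ℝ E,
        (topDualPairing ℝ (G →ᵇ ℝ)).flip
          (toWeakSpace ℝ (G →ᵇ ℝ) (T (WeakDual.toStrongDual ψ))) Φ = ψ η := by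
      intro ψ
      have := congrFun (congrArg (fun (z : StrongDual ℝ (StrongDual ℝ E)) =>
        (z : (E →L[ℝ] ℝ) → ℝ)) hη) (WeakDual.toStrongDual ψ)
      exact (by simpa [NormedSpace.inclusionInDoubleDual, topDualPairing_apply] using this.symm :
        Φ (T (WeakDual.toStrongDual ψ)) = ψ η)
    simp only [this]
    exact WeakBilin.eval_continuous _ η
  -- The closed ball of radius `‖φ‖` in the weak-* dual is compact (Banach–Alaoglu).
  have hK : IsCompact (WeakDual.toStrongDual ⁻¹' Metric.closedBall (0 : E →L[ℝ] ℝ) ‖φ‖) :=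
    WeakDual.isCompact_closedBall (𝕜 := ℝ) 0 ‖φ‖
  -- Its image under `T` (into the weak space) is compact.
  have hTK : IsCompact ((fun ψ : WeakDual ℝ E =>
      toWeakSpace ℝ (G →ᵇ ℝ) (T (WeakDual.toStrongDual ψ))) ''
      (WeakDual.toStrongDual ⁻¹' Metric.closedBall (0 : E →L[ℝ] ℝ) ‖φ‖)) :=
    hK.image hTw
  refine ⟨T0 φ, fun g => rfl, ?_⟩
  have ht2 : T2Space (WeakSpace ℝ (G →ᵇ ℝ)) := weakSpace_t2
  -- Each translate of `F` is `T ψ` for a functional `ψ` of norm at most `‖φ‖`.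
  have hsub : toWeakSpace ℝ (G →ᵇ ℝ) ''
      {h : G →ᵇ ℝ | ∃ g : G, h = (T0 φ).compContinuous
        (⟨fun x => g * x, continuous_const.mul continuous_id⟩ : C(G, G))} ⊆
      (fun ψ : WeakDual ℝ E =>
        toWeakSpace ℝ (G →ᵇ ℝ) (T (WeakDual.toStrongDual ψ))) ''
        (WeakDual.toStrongDual ⁻¹' Metric.closedBall (0 : E →L[ℝ] ℝ) ‖φ‖) := by
    rintro - ⟨h, ⟨g, rfl⟩, rfl⟩
    refine ⟨φ.comp ((π g).toContinuousLinearEquiv : E →L[ℝ] E), ?_, ?_⟩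
    · show dist (φ.comp ((π g).toContinuousLinearEquiv : E →L[ℝ] E)) 0 ≤ ‖φ‖; rw [dist_zero_right]
      apply ContinuousLinearMap.opNorm_le_bound _ (norm_nonneg φ)
      intro x
      calc ‖φ ((π g) x)‖ ≤ ‖φ‖ * ‖(π g) x‖ := φ.le_opNorm _
      _ = ‖φ‖ * ‖x‖ := by rw [(π g).norm_map]
    · refine congrArg (toWeakSpace ℝ (G →ᵇ ℝ)) ?_
      ext x
      show φ ((π g) ((π x) ξ)) = φ ((π (g * x)) ξ)
      rw [hmul g x]
      rfl
  exact hTK.of_isClosed_subset isClosed_closure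
    (closure_minimal hsub hTK.isClosed)
end

section
/- Let (X, d) be a metric space with a distinguished point ∗ ∈ X. There exist a real normed space L and an isometric map ι : X → L with ι(∗) = 0 whose image linearly spans L, such that for every real normed space F and every 1-Lipschitz map f : X → F with f(∗) = 0 there is a unique linear map T : L → F of operator norm at most 1 with T ∘ ι = f. -/
/-- A bundled real normed space. -/
structure NormedSpaceStruct : Type 1 where
  carrier : Type
  [nacg : NormedAddCommGroup carrier]
  [nsp : NormedSpace ℝ carrier]

attribute [instance] NormedSpaceStruct.nacg NormedSpaceStruct.nsp

section AE

variable {X : Type} [MetricSpace X]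

/-- The space of 1-Lipschitz real functions vanishing at the base point. -/
def SL (star : X) : Type := {f : X → ℝ // LipschitzWith 1 f ∧ f star = 0}

instance (star : X) : Nonempty (SL star) :=
  ⟨⟨fun _ => 0, (LipschitzWith.const 0).weaken zero_le_one, rfl⟩⟩

/-- Evaluation of a finitely-supported formal combination against a Lipschitz function. -/
noncomputable def ev (star : X) (f : SL star) : (X →₀ ℝ) →ₗ[ℝ] ℝ :=
  Finsupp.linearCombination ℝ f.1

theorem abs_apply_le (star : X) (f : SL star) (x : X) : |f.1 x| ≤ dist x star := by
  have := f.2.1.dist_le_mul x star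
  rw [f.2.2] at this
  simpa [Real.dist_eq] using this

theorem ev_bound (star : X) (f : SL star) (m : X →₀ ℝ) :
    |ev star f m| ≤ m.sum fun x a => |a| * dist x star := by
  rw [ev, Finsupp.linearCombination_apply, Finsupp.sum]
  refine (Finset.abs_sum_le_sum_abs _ _).trans ?_
  rw [Finsupp.sum]
  refine Finset.sum_le_sum fun x _ => ?_
  rw [smul_eq_mul, abs_mul]
  exact mul_le_mul_of_nonneg_left (abs_apply_le star f x) (abs_nonneg _)

theorem ev_bddAbove (star : X) (m : X →₀ ℝ) :
    BddAbove (Set.range fun f : SL star => |ev star f m|) := by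
  refine ⟨m.sum fun x a => |a| * dist x star, ?_⟩
  rintro _ ⟨f, rfl⟩
  exact ev_bound star f m

/-- The Arens–Eells seminorm. -/
noncomputable def aeSeminorm (star : X) : AddGroupSeminorm (X →₀ ℝ) where
  toFun m := ⨆ f : SL star, |ev star f m|
  map_zero' := by simp [ciSup_const]
  add_le' m n := by
    refine ciSup_le fun f => ?_
    calc |ev star f (m + n)| = |ev star f m + ev star f n| := by rw [map_add]
      _ ≤ |ev star f m| + |ev star f n| := abs_add_le _ _
      _ ≤ _ := add_le_add (le_ciSup (ev_bddAbove star m) f) (le_ciSup (ev_bddAbove star n) f)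
  neg' m := by
    refine iSup_congr fun f => ?_
    rw [map_neg, abs_neg]

theorem aeSeminorm_le_of (star : X) (m : X →₀ ℝ) {c : ℝ}
    (h : ∀ f : SL star, |ev star f m| ≤ c) : aeSeminorm star m ≤ c :=
  ciSup_le h

theorem le_aeSeminorm (star : X) (m : X →₀ ℝ) (f : SL star) :
    |ev star f m| ≤ aeSeminorm star m :=
  le_ciSup (ev_bddAbove star m) f

/-- Type synonym carrying the Arens–Eells seminorm. -/
def AE (star : X) : Type := X →₀ ℝ

noncomputable instance (star : X) : AddCommGroup (AE star) := inferInstanceAs (AddCommGroup (X →₀ ℝ))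
noncomputable instance (star : X) : Module ℝ (AE star) := inferInstanceAs (Module ℝ (X →₀ ℝ))

noncomputable instance (star : X) : SeminormedAddCommGroup (AE star) :=
  @AddGroupSeminorm.toSeminormedAddCommGroup (AE star) _ (aeSeminorm star)

theorem AE.norm_def (star : X) (m : AE star) : ‖m‖ = aeSeminorm star m := rfl

noncomputable instance (star : X) : NormedSpace ℝ (AE star) where
  norm_smul_le c m := by
    rw [AE.norm_def, AE.norm_def]
    refine aeSeminorm_le_of star _ fun f => ?_
    have : ev star f (c • m) = c * ev star f m := by
      exact (ev star f).map_smul c m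
    rw [this, abs_mul, Real.norm_eq_abs]
    exact mul_le_mul_of_nonneg_left (le_aeSeminorm star m f) (abs_nonneg _)

end AE

/-- Existence of the Lipschitz-free normed space over a pointed metric space `(X, ∗)`:
there is a real normed space `L` and an isometric embedding `ι : X → L` sending `∗` to `0`,
whose image linearly spans `L`, such that every `1`-Lipschitz map `f : X → F` into a real
normed space with `f ∗ = 0` factors uniquely through `ι` via a linear map of norm at most
`1`. -/
theorem statement8 {X : Type} [MetricSpace X] (star : X) :
    ∃ (L : NormedSpaceStruct) (ι : X → L.carrier),
      Isometry ι ∧ ι star = 0 ∧ Submodule.span ℝ (Set.range ι) = ⊤ ∧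
      ∀ (F : Type) [NormedAddCommGroup F] [NormedSpace ℝ F],
        ∀ f : X → F, LipschitzWith 1 f → f star = 0 →
          ∃! T : L.carrier →ₗ[ℝ] F,
            (∀ v : L.carrier, ‖T v‖ ≤ ‖v‖) ∧ ∀ x : X, T (ι x) = f x := by
  classical
  set L : NormedSpaceStruct := ⟨SeparationQuotient (AE star)⟩ with hL
  -- the delta functions
  set δ : X → AE star := fun x => Finsupp.single x 1 with hδ
  have hevδ : ∀ (f : SL star) (x : X), ev star f (δ x) = f.1 x := by
    intro f x
    simp [ev, hδ, Finsupp.linearCombination_single]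
  set ι : X → L.carrier := fun x => SeparationQuotient.mk (δ x - δ star) with hι
  -- mk as a linear map
  set mkₗ : AE star →ₗ[ℝ] L.carrier :=
    { toFun := SeparationQuotient.mk
      map_add' := fun a b => rfl
      map_smul' := fun c a => rfl } with hmkₗ
  have hmk_star : SeparationQuotient.mk (δ star) = (0 : L.carrier) := by
    rw [SeparationQuotient.mk_eq_zero_iff]
    refine le_antisymm ?_ (norm_nonneg _)
    rw [AE.norm_def]
    refine aeSeminorm_le_of star _ fun f => ?_
    rw [hevδ f star, f.2.2, abs_zero]
  have hmkδ : ∀ x : X, SeparationQuotient.mk (δ x) = ι x := by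
    intro x
    have : SeparationQuotient.mk (δ x) - ι x = SeparationQuotient.mk (δ star) := by
      rw [hι]
      show mkₗ (δ x) - mkₗ (δ x - δ star) = mkₗ (δ star)
      rw [← map_sub]
      congr 1
      abel
    rw [hmk_star, sub_eq_zero] at this
    exact this
  have hspan : Submodule.span ℝ (Set.range ι) = ⊤ := by
    have hsur : Function.Surjective (SeparationQuotient.mk : AE star → L.carrier) :=
      SeparationQuotient.surjective_mk
    have hrange : LinearMap.range mkₗ = ⊤ := LinearMap.range_eq_top.2 hsur
    have hb : Submodule.span ℝ (Set.range fun x : X => Finsupp.single x (1:ℝ)) = ⊤ := by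
      have := (Finsupp.basisSingleOne (ι := X) (R := ℝ)).span_eq
      rwa [Finsupp.coe_basisSingleOne] at this
    have : Submodule.map mkₗ (Submodule.span ℝ (Set.range δ)) = ⊤ := by
      rw [show Submodule.span ℝ (Set.range δ) = ⊤ from hb]
      rw [Submodule.map_top, hrange]
    rw [Submodule.map_span] at this
    rw [← top_le_iff, ← this]
    refine Submodule.span_le.2 ?_
    rintro _ ⟨_, ⟨x, rfl⟩, rfl⟩
    have : mkₗ (δ x) = ι x := hmkδ x
    rw [this]
    exact Submodule.subset_span ⟨x, rfl⟩
  refine ⟨L, ι, ?_, ?_, hspan, ?_⟩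
  · -- Isometry
    refine Isometry.of_dist_eq fun x y => ?_
    have key : dist (ι x) (ι y) = aeSeminorm star (δ x - δ y) := by
      rw [dist_eq_norm, hι]
      have : SeparationQuotient.mk (δ x - δ star) - SeparationQuotient.mk (δ y - δ star)
          = SeparationQuotient.mk (δ x - δ y) := by
        show mkₗ (δ x - δ star) - mkₗ (δ y - δ star) = mkₗ (δ x - δ y)
        rw [← map_sub]; congr 1; abel
      rw [this, SeparationQuotient.norm_mk, AE.norm_def]
    rw [key]
    have hev_sub : ∀ f : SL star, ev star f (δ x - δ y) = f.1 x - f.1 y := by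
      intro f
      exact ((ev star f).map_sub (δ x) (δ y)).trans (by rw [hevδ, hevδ])
    refine le_antisymm ?_ ?_
    · refine aeSeminorm_le_of star _ fun f => ?_
      rw [hev_sub f]
      have := f.2.1.dist_le_mul x y
      simpa [Real.dist_eq] using this
    · set f₀ : SL star := ⟨fun z => dist z y - dist star y,
        LipschitzWith.of_dist_le_mul fun a b => by
          simp only [NNReal.coe_one, one_mul, Real.dist_eq, sub_sub_sub_cancel_right]
          exact abs_dist_sub_le a b y,
        by simp⟩ with hf₀
      have := le_aeSeminorm star (δ x - δ y) f₀
      rw [hev_sub f₀] at this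
      simpa [hf₀, dist_comm] using this
  · -- ι star = 0
    rw [hι]
    simp
  · -- universal property
    intro F _ _ f hf hf0
    set T₀ : AE star →ₗ[ℝ] F := Finsupp.linearCombination ℝ f with hT₀def
    have hT₀ : ∀ m : AE star, ‖T₀ m‖ ≤ ‖m‖ := by
      intro m
      obtain ⟨g, hg1, hgx⟩ := exists_dual_vector'' ℝ (T₀ m)
      have hg1' : ‖g‖₊ ≤ 1 := by exact_mod_cast hg1
      have hgl : LipschitzWith 1 (⇑g ∘ f) := by
        have h := g.lipschitz.comp hf
        rw [mul_one] at h
        exact h.weaken hg1'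
      set fg : SL star := ⟨⇑g ∘ f, hgl, by simp [Function.comp_apply, hf0]⟩ with hfg
      have key : ev star fg m = g (T₀ m) := by
        rw [ev, hT₀def]
        exact (Finsupp.apply_linearCombination ℝ (g : F →ₗ[ℝ] ℝ) f m).symm
      calc ‖T₀ m‖ = g (T₀ m) := by rw [hgx]; simp
        _ ≤ |ev star fg m| := by rw [key]; exact le_abs_self _
        _ ≤ ‖m‖ := le_aeSeminorm star m fg
    have hlift : ∀ a b : AE star, Inseparable a b → T₀ a = T₀ b := by
      intro a b h
      have hd : dist a b = 0 := Metric.inseparable_iff.1 h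
      have : ‖T₀ a - T₀ b‖ ≤ 0 := by
        calc ‖T₀ a - T₀ b‖ = ‖T₀ (a - b)‖ := by rw [map_sub]
          _ ≤ ‖a - b‖ := hT₀ _
          _ = dist a b := (dist_eq_norm a b).symm
          _ = 0 := hd
      have := le_antisymm this (norm_nonneg _)
      rwa [norm_eq_zero, sub_eq_zero] at this
    set T : L.carrier →ₗ[ℝ] F :=
      { toFun := SeparationQuotient.lift T₀ hlift
        map_add' := by
          intro a b
          obtain ⟨x, rfl⟩ := SeparationQuotient.surjective_mk a
          obtain ⟨y, rfl⟩ := SeparationQuotient.surjective_mk b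
          rw [← SeparationQuotient.mk_add, SeparationQuotient.lift_mk,
            SeparationQuotient.lift_mk, SeparationQuotient.lift_mk, map_add]
        map_smul' := by
          intro c a
          obtain ⟨x, rfl⟩ := SeparationQuotient.surjective_mk a
          dsimp only [RingHom.id_apply]
          rw [← SeparationQuotient.mk_smul, SeparationQuotient.lift_mk,
            SeparationQuotient.lift_mk, map_smul] } with hT
    have hTmk : ∀ m : AE star, T (SeparationQuotient.mk m) = T₀ m := fun m => rfl
    have hTι : ∀ x : X, T (ι x) = f x := by
      intro x
      rw [hι]
      show T₀ (δ x - δ star) = f x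
      rw [map_sub, hT₀def, hδ]
      erw [Finsupp.linearCombination_single, Finsupp.linearCombination_single]
      rw [one_smul, one_smul, hf0, sub_zero]
    refine ⟨T, ⟨?_, hTι⟩, ?_⟩
    · intro v
      obtain ⟨m, rfl⟩ := SeparationQuotient.surjective_mk v
      rw [hTmk, SeparationQuotient.norm_mk]
      exact hT₀ m
    · rintro T' ⟨hT'le, hT'ι⟩
      refine LinearMap.ext_on hspan ?_
      rintro _ ⟨x, rfl⟩
      rw [hT'ι x, hTι x]
end

section
/- Let (X, d, ∗) be a pointed metric space, B a real Banach space, and ι : X → B an isometric map with ι(∗) = 0 whose image spans a dense linear subspace of B and which has the universal property: for every real Banach space F and every 1-Lipschitz map f : X → F with f(∗) = 0 there is a unique continuous linear map T : B → F of operator norm at most 1 with T ∘ ι = f. Then every bijective self-isometry g of X extends in a unique way to a bijective affine self-isometry g̃ of B, i.e., there is a unique affine bijective isometry g̃ : B → B with g̃ ∘ ι = ι ∘ g; moreover, the assignment g ↦ g̃ is a group homomorphism from the group of bijective self-isometries of X into the group of bijective affine self-isometries of B. -/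
/-- If `ι : X → B` is an isometric embedding of a pointed metric space into a real Banach
space with `ι ∗ = 0`, dense linear span, and the universal property of the Lipschitz-free
Banach space, then every bijective self-isometry `g` of `X` extends uniquely to a bijective
affine self-isometry of `B`, and the resulting assignment is a group homomorphism. -/
theorem statement10 {X B : Type} [MetricSpace X] (star : X)
    [NormedAddCommGroup B] [NormedSpace ℝ B] [CompleteSpace B]
    (ι : X → B) (hiso : Isometry ι) (hstar : ι star = 0)
    (hdense : Dense (↑(Submodule.span ℝ (Set.range ι)) : Set B))
    (huniv : ∀ (F : Type) [NormedAddCommGroup F] [NormedSpace ℝ F] [CompleteSpace F],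
      ∀ f : X → F, LipschitzWith 1 f → f star = 0 →
        ∃! T : B →L[ℝ] F, ‖T‖ ≤ 1 ∧ ∀ x : X, T (ι x) = f x) :
    ∃ ext : (X ≃ᵢ X) → (B →ᵃ[ℝ] B),
      (∀ g : X ≃ᵢ X,
        (Isometry ⇑(ext g) ∧ Function.Bijective ⇑(ext g) ∧
          ∀ x : X, ext g (ι x) = ι (g x)) ∧
        (∀ A : B →ᵃ[ℝ] B, Isometry ⇑A → Function.Bijective ⇑A →
          (∀ x : X, A (ι x) = ι (g x)) → A = ext g)) ∧
      (∀ g h : X ≃ᵢ X, ext (h.trans g) = (ext g).comp (ext h)) := by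
  classical
  -- For each g, get the linear part from the universal property
  have hT : ∀ g : X ≃ᵢ X, ∃ T : B →L[ℝ] B,
      (‖T‖ ≤ 1 ∧ ∀ x : X, T (ι x) = ι (g x) - ι (g star)) ∧
      ∀ T' : B →L[ℝ] B, (‖T'‖ ≤ 1 ∧ ∀ x : X, T' (ι x) = ι (g x) - ι (g star)) → T' = T := by
    intro g
    have hlip : LipschitzWith 1 (fun x : X => ι (g x) - ι (g star)) := by
      apply LipschitzWith.of_dist_le_mul
      intro x y
      rw [NNReal.coe_one, one_mul, dist_sub_right, hiso.dist_eq, g.isometry.dist_eq]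
    have h0 : (fun x : X => ι (g x) - ι (g star)) star = 0 := by simp
    obtain ⟨T, h1, h2⟩ := huniv B _ hlip h0
    exact ⟨T, h1, h2⟩
  choose T hT1 hT2 using hT
  have hTnorm : ∀ g, ‖T g‖ ≤ 1 := fun g => (hT1 g).1
  have hTι : ∀ g x, T g (ι x) = ι (g x) - ι (g star) := fun g => (hT1 g).2
  -- composition identity
  have hcomp : ∀ g : X ≃ᵢ X, ∀ b : B, T g.symm (T g b) = b := by
    intro g
    have : (T g.symm).comp (T g) = ContinuousLinearMap.id ℝ B := by
      apply ContinuousLinearMap.ext_on hdense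
      rintro _ ⟨x, rfl⟩
      simp [hTι, map_sub, hstar]
    intro b
    have := congrArg (fun f : B →L[ℝ] B => f b) this
    simpa using this
  have hTiso : ∀ g : X ≃ᵢ X, ∀ b : B, ‖T g b‖ = ‖b‖ := by
    intro g b
    refine le_antisymm ?_ ?_
    · calc ‖T g b‖ ≤ ‖T g‖ * ‖b‖ := (T g).le_opNorm b
        _ ≤ 1 * ‖b‖ := by gcongr; exact hTnorm g
        _ = ‖b‖ := one_mul _
    · calc ‖b‖ = ‖T g.symm (T g b)‖ := by rw [hcomp g b]
        _ ≤ ‖T g.symm‖ * ‖T g b‖ := (T g.symm).le_opNorm _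
        _ ≤ 1 * ‖T g b‖ := by gcongr; exact hTnorm g.symm
        _ = ‖T g b‖ := one_mul _
  -- the affine extension
  set ext : (X ≃ᵢ X) → (B →ᵃ[ℝ] B) := fun g =>
    { toFun := fun b => T g b + ι (g star)
      linear := (T g : B →ₗ[ℝ] B)
      map_vadd' := by
        intro p v
        simp only [vadd_eq_add, map_add, ContinuousLinearMap.coe_coe]
        abel } with hext
  have hext_apply : ∀ g b, ext g b = T g b + ι (g star) := fun g b => rfl
  have hextι : ∀ g : X ≃ᵢ X, ∀ x : X, ext g (ι x) = ι (g x) := by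
    intro g x
    rw [hext_apply, hTι]
    abel
  have hextiso : ∀ g : X ≃ᵢ X, Isometry ⇑(ext g) := by
    intro g
    intro a b
    simp only [hext_apply, edist_add_right]
    rw [edist_eq_enorm_sub, ← map_sub, edist_eq_enorm_sub, enorm_eq_nnnorm, enorm_eq_nnnorm]
    congr 1
    ext
    exact hTiso g (a - b)
  have hextinv : ∀ g : X ≃ᵢ X, ∀ b : B, ext g.symm (ext g b) = b := by
    intro g b
    simp only [hext_apply, map_add, hcomp g b]
    have := hTι g.symm (g star)
    rw [this]
    simp [hstar]
  have hextbij : ∀ g : X ≃ᵢ X, Function.Bijective ⇑(ext g) := by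
    intro g
    refine Function.bijective_iff_has_inverse.mpr ⟨⇑(ext g.symm), hextinv g, ?_⟩
    intro b
    have := hextinv g.symm b
    rwa [IsometryEquiv.symm_symm] at this
  -- uniqueness
  have huniq : ∀ g : X ≃ᵢ X, ∀ A : B →ᵃ[ℝ] B, Isometry ⇑A → Function.Bijective ⇑A →
      (∀ x : X, A (ι x) = ι (g x)) → A = ext g := by
    intro g A hAiso _ hAcomm
    have hlinA : ∀ b : B, A.linear b = A b - A 0 := by
      intro b
      have := A.map_vadd 0 b
      simp only [vadd_eq_add, add_zero] at this
      rw [this]; abel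
    have hA0 : A 0 = ι (g star) := by
      rw [← hstar, hAcomm star]
    have hcont : Continuous ⇑A.linear := by
      have : ⇑A.linear = fun b => A b - A 0 := funext hlinA
      rw [this]
      exact hAiso.continuous.sub continuous_const
    set L : B →L[ℝ] B := ⟨A.linear, hcont⟩ with hL
    have hLnorm : ‖L‖ ≤ 1 := by
      apply ContinuousLinearMap.opNorm_le_bound _ zero_le_one
      intro b
      rw [one_mul]
      show ‖A.linear b‖ ≤ ‖b‖
      rw [hlinA, ← dist_eq_norm, hAiso.dist_eq, dist_zero_right]
    have hLι : ∀ x : X, L (ι x) = ι (g x) - ι (g star) := by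
      intro x
      show A.linear (ι x) = _
      rw [hlinA, hAcomm, hA0]
    have hLT : L = T g := hT2 g L ⟨hLnorm, hLι⟩
    ext b
    rw [hext_apply]
    have : A b = A.linear b + A 0 := by rw [hlinA]; abel
    rw [this, hA0]
    congr 1
    have := congrArg (fun f : B →L[ℝ] B => f b) hLT
    exact this
  refine ⟨ext, fun g => ⟨⟨hextiso g, hextbij g, hextι g⟩, huniq g⟩, ?_⟩
  intro g h
  refine (huniq (h.trans g) ((ext g).comp (ext h)) ?_ ?_ ?_).symm
  · rw [AffineMap.coe_comp]
    exact (hextiso g).comp (hextiso h)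
  · rw [AffineMap.coe_comp]
    exact (hextbij g).comp (hextbij h)
  · intro x
    simp only [AffineMap.comp_apply, hextι]
    rfl
end

section
/- Let (X, d, ∗) be a pointed metric space, B a real Banach space, and ι : X → B an isometric map with ι(∗) = 0 whose image spans a dense linear subspace of B. Let a topological group G act continuously by isometries on X, and let G act on B by bijective affine isometries so that g·ι(x) = ι(g·x) for all g ∈ G and x ∈ X. Then the action of G on B is jointly continuous. -/
/-- If a topological group `G` acts continuously by isometries on a metric space `X`,
isometrically embedded via `ι` (with `ι ∗ = 0` and dense linear span) into a real Banach
space `B`, and `G` acts on `B` by bijective affine isometries compatibly with `ι`, then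
the action of `G` on `B` is jointly continuous. -/
theorem statement11 {G X B : Type} [Group G] [TopologicalSpace G] [IsTopologicalGroup G]
    [MetricSpace X] [NormedAddCommGroup B] [NormedSpace ℝ B] [CompleteSpace B]
    (star : X) (ι : X → B) (hiso : Isometry ι) (hstar : ι star = 0)
    (hdense : Dense (↑(Submodule.span ℝ (Set.range ι)) : Set B))
    (actX : G → X → X)
    (hXiso : ∀ g, Isometry (actX g)) (hXbij : ∀ g, Function.Bijective (actX g))
    (hXone : ∀ x, actX 1 x = x) (hXmul : ∀ g h x, actX (g * h) x = actX g (actX h x))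
    (hXcont : Continuous fun p : G × X => actX p.1 p.2)
    (actB : G → (B →ᵃ[ℝ] B))
    (hBiso : ∀ g, Isometry ⇑(actB g)) (hBbij : ∀ g, Function.Bijective ⇑(actB g))
    (hBone : ∀ v : B, actB 1 v = v)
    (hBmul : ∀ (g h : G) (v : B), actB (g * h) v = actB g (actB h v))
    (hcompat : ∀ (g : G) (x : X), actB g (ι x) = ι (actX g x)) :
    Continuous fun p : G × B => actB p.1 p.2 := by
  have cX : ∀ x : X, Continuous fun g : G => ι (actX g x) := fun x =>
    hiso.continuous.comp (hXcont.comp (continuous_id.prodMk continuous_const))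
  have c0 : Continuous fun g : G => actB g 0 := by
    have h : ∀ g : G, actB g 0 = ι (actX g star) := fun g => by rw [← hstar, hcompat]
    simp_rw [h]; exact cX star
  have key : ∀ (g : G) (v : B), actB g v = (actB g).linear v + actB g 0 := by
    intro g v
    have := (actB g).map_vadd 0 v
    simpa using this
  have hspan : ∀ v ∈ Submodule.span ℝ (Set.range ι), Continuous fun g : G => actB g v := by
    intro v hv
    induction hv using Submodule.span_induction with
    | mem x hx =>
        obtain ⟨x, rfl⟩ := hx
        simp_rw [hcompat]
        exact cX x
    | zero => exact c0
    | add v w _ _ hv hw =>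
        have h : ∀ g : G, actB g (v + w) = actB g v + actB g w - actB g 0 := by
          intro g; rw [key g (v + w), key g v, key g w, map_add]; abel
        simp_rw [h]
        exact (hv.add hw).sub c0
    | smul c v _ hv =>
        have h : ∀ g : G, actB g (c • v) = c • (actB g v - actB g 0) + actB g 0 := by
          intro g
          rw [key g (c • v), key g v, map_smul]
          rw [add_sub_cancel_right]
        simp_rw [h]
        exact ((hv.sub c0).const_smul c).add c0
  have hall : ∀ v : B, Continuous fun g : G => actB g v := by
    intro v
    rw [continuous_iff_continuousAt]
    intro g₀
    rw [ContinuousAt, Metric.tendsto_nhds]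
    intro ε hε
    obtain ⟨w, hwmem, hwd⟩ := Metric.mem_closure_iff.mp (hdense v) (ε / 3) (by positivity)
    have hcw := hspan w hwmem
    have h2 := Metric.tendsto_nhds.mp (hcw.continuousAt (x := g₀)) (ε / 3) (by positivity)
    filter_upwards [h2] with g hg
    have e1 : dist (actB g v) (actB g w) = dist v w := (hBiso g).dist_eq v w
    have e2 : dist (actB g₀ w) (actB g₀ v) = dist w v := (hBiso g₀).dist_eq w v
    calc dist (actB g v) (actB g₀ v)
        ≤ dist (actB g v) (actB g w) + dist (actB g w) (actB g₀ w)
            + dist (actB g₀ w) (actB g₀ v) := dist_triangle4 _ _ _ _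
      _ < ε / 3 + ε / 3 + ε / 3 := by
          rw [e1, e2, dist_comm w v]
          exact add_lt_add (add_lt_add hwd hg) hwd
      _ = ε := by ring
  rw [continuous_iff_continuousAt]
  rintro ⟨g₀, v₀⟩
  rw [ContinuousAt, tendsto_iff_dist_tendsto_zero]
  have hb : ∀ p : G × B, dist (actB p.1 p.2) (actB g₀ v₀)
      ≤ dist p.2 v₀ + dist (actB p.1 v₀) (actB g₀ v₀) := by
    intro p
    calc dist (actB p.1 p.2) (actB g₀ v₀)
        ≤ dist (actB p.1 p.2) (actB p.1 v₀) + dist (actB p.1 v₀) (actB g₀ v₀) :=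
          dist_triangle _ _ _
      _ = dist p.2 v₀ + dist (actB p.1 v₀) (actB g₀ v₀) := by
          rw [(hBiso p.1).dist_eq]
  have hg : Filter.Tendsto (fun p : G × B => dist p.2 v₀ + dist (actB p.1 v₀) (actB g₀ v₀))
      (nhds (g₀, v₀)) (nhds 0) := by
    have t1 : Filter.Tendsto (fun p : G × B => dist p.2 v₀) (nhds (g₀, v₀)) (nhds 0) := by
      have hc : Continuous fun p : G × B => dist p.2 v₀ :=
        continuous_snd.dist continuous_const
      have := hc.tendsto (g₀, v₀)
      simpa using this
    have t2 : Filter.Tendsto (fun p : G × B => dist (actB p.1 v₀) (actB g₀ v₀))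
        (nhds (g₀, v₀)) (nhds 0) := by
      have hc : Continuous fun p : G × B => dist (actB p.1 v₀) (actB g₀ v₀) :=
        ((hall v₀).comp continuous_fst).dist continuous_const
      have := hc.tendsto (g₀, v₀)
      simpa using this
    simpa using t1.add t2
  exact squeeze_zero (fun p => dist_nonneg) hb hg
end

section
/- Let Y be a metric space, let A, B ⊆ Y be nonempty finite subsets with d(a, b) ≥ ε for all a ∈ A and b ∈ B, let φ be a Katetov function on A and ψ a Katetov function on B. Then the Katetov extensions φ̂ and ψ̂ to Y satisfy sup_{x ∈ Y} |φ̂(x) − ψ̂(x)| ≥ ε. -/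
/-- `f` is a Katetov function on the finite set `S`: for all `x, y ∈ S`,
`|f x - f y| ≤ dist x y ≤ f x + f y`. -/
def KatetovOn {Z : Type*} [MetricSpace Z] (S : Finset Z) (f : Z → ℝ) : Prop :=
  ∀ x ∈ S, ∀ y ∈ S, |f x - f y| ≤ dist x y ∧ dist x y ≤ f x + f y

/-- The Katetov extension of a function `f` defined on a nonempty finite set `S`:
`f̂ x = min_{s ∈ S} (f s + dist s x)`. -/
noncomputable def katExt {Z : Type*} [MetricSpace Z] (S : Finset Z) (hS : S.Nonempty)
    (f : Z → ℝ) (x : Z) : ℝ :=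
  S.inf' hS fun s => f s + dist s x

lemma katetovOn_nonneg {Z : Type*} [MetricSpace Z] {S : Finset Z} {f : Z → ℝ}
    (hf : KatetovOn S f) {s : Z} (hs : s ∈ S) : 0 ≤ f s := by
  have := (hf s hs s hs).2
  rw [dist_self] at this
  linarith

/-- If `A` and `B` are nonempty finite subsets of a metric space `Y` at mutual distance at
least `ε`, `φ` is Katetov on `A` and `ψ` is Katetov on `B`, then the Katetov extensions
satisfy `sup_{x ∈ Y} |φ̂ x - ψ̂ x| ≥ ε`. -/
theorem statement13 {Y : Type} [MetricSpace Y] (A B : Finset Y)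
    (hA : A.Nonempty) (hB : B.Nonempty) (ε : ℝ)
    (hfar : ∀ a ∈ A, ∀ b ∈ B, ε ≤ dist a b)
    (φ ψ : Y → ℝ) (hφ : KatetovOn A φ) (hψ : KatetovOn B ψ) :
    ε ≤ ⨆ x : Y, |katExt A hA φ x - katExt B hB ψ x| := by
  obtain ⟨a₀, ha₀, hmin⟩ := A.exists_min_image φ hA
  obtain ⟨b₀, hb₀⟩ := id hB
  set F : Y → ℝ := fun x => |katExt A hA φ x - katExt B hB ψ x| with hF
  set D : ℝ := B.sup' hB (fun b => dist a₀ b) with hD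
  set D' : ℝ := A.sup' hA (fun a => dist b₀ a) with hD'
  have hbdd : BddAbove (Set.range F) := by
    refine ⟨max (φ a₀ + D) (ψ b₀ + D'), ?_⟩
    rintro _ ⟨x, rfl⟩
    have h1 : katExt A hA φ x ≤ φ a₀ + dist a₀ x := Finset.inf'_le _ ha₀
    have h2 : katExt B hB ψ x ≤ ψ b₀ + dist b₀ x := Finset.inf'_le _ hb₀
    have h3 : dist a₀ x - D ≤ katExt B hB ψ x := by
      apply Finset.le_inf'
      intro b hb
      have hψb : 0 ≤ ψ b := katetovOn_nonneg hψ hb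
      have hbd : dist a₀ b ≤ D := Finset.le_sup' _ hb
      have : dist a₀ x ≤ dist a₀ b + dist b x := dist_triangle _ _ _
      linarith
    have h4 : dist b₀ x - D' ≤ katExt A hA φ x := by
      apply Finset.le_inf'
      intro a ha
      have hφa : 0 ≤ φ a := katetovOn_nonneg hφ ha
      have had : dist b₀ a ≤ D' := Finset.le_sup' _ ha
      have : dist b₀ x ≤ dist b₀ a + dist a x := dist_triangle _ _ _
      linarith
    rw [abs_sub_le_iff]
    constructor
    · exact le_max_of_le_left (by linarith)
    · exact le_max_of_le_right (by linarith)
  by_contra hlt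
  push_neg at hlt
  have hall : ∀ x, F x < ε := fun x => lt_of_le_of_lt (le_ciSup hbdd x) hlt
  -- φ̂ a₀ = φ a₀
  have hφext : katExt A hA φ a₀ = φ a₀ := by
    apply le_antisymm
    · have h := Finset.inf'_le (b := a₀) (fun s => φ s + dist s a₀) ha₀
      simp only [dist_self, add_zero] at h
      exact h
    · apply Finset.le_inf'
      intro s hs
      have h := abs_le.mp (hφ a₀ ha₀ s hs).1
      have := dist_comm a₀ s
      linarith [h.1]
  -- extract b₁
  obtain ⟨b₁, hb₁, hb₁eq⟩ := B.exists_mem_eq_inf' hB (fun b => ψ b + dist b a₀)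
  have hFa₀ := abs_lt.mp (hall a₀)
  have key1 : ψ b₁ + dist b₁ a₀ < φ a₀ + ε := by
    have : katExt B hB ψ a₀ = ψ b₁ + dist b₁ a₀ := hb₁eq
    rw [hφext, this] at hFa₀
    linarith [hFa₀.1]
  -- ψ̂ b₁ = ψ b₁
  have hψext : katExt B hB ψ b₁ = ψ b₁ := by
    apply le_antisymm
    · have h := Finset.inf'_le (b := b₁) (fun s => ψ s + dist s b₁) hb₁
      simp only [dist_self, add_zero] at h
      exact h
    · apply Finset.le_inf'
      intro s hs
      have h := abs_le.mp (hψ b₁ hb₁ s hs).1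
      have := dist_comm b₁ s
      linarith [h.1]
  -- extract a₁
  obtain ⟨a₁, ha₁, ha₁eq⟩ := A.exists_mem_eq_inf' hA (fun a => φ a + dist a b₁)
  have hFb₁ := abs_lt.mp (hall b₁)
  have key2 : φ a₁ + dist a₁ b₁ < ψ b₁ + ε := by
    have : katExt A hA φ b₁ = φ a₁ + dist a₁ b₁ := ha₁eq
    rw [hψext, this] at hFb₁
    linarith [hFb₁.2]
  have e1 : ε ≤ dist a₁ b₁ := hfar a₁ ha₁ b₁ hb₁
  have e2 : ε ≤ dist a₀ b₁ := hfar a₀ ha₀ b₁ hb₁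
  have e3 : φ a₀ ≤ φ a₁ := hmin a₁ ha₁
  have := dist_comm b₁ a₀
  linarith
end

section
/- Let a group G act by isometries on a metric space X, strongly moving with constant ε > 0. Let X* be the set of all functions X → ℝ of the form f̂ for some nonempty finite S ⊆ X and some Katetov function f on S, equipped with the supremum metric d(φ, ψ) = sup_{x ∈ X} |φ(x) − ψ(x)| (which is finite on X*). Then G acts on X* by isometries via g·φ = φ ∘ g⁻¹, this action extends the action on X (identifying x ∈ X with the Katetov extension of the zero function on {x}), and it is strongly moving with the same constant ε. -/
/-- The space `X*` of all Katetov extensions of Katetov functions on nonempty finite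
subsets of `X`. -/
def KatStar (X : Type*) [MetricSpace X] : Set (X → ℝ) :=
  {φ | ∃ (S : Finset X) (hS : S.Nonempty) (f : X → ℝ), KatetovOn S f ∧ φ = katExt S hS f}

/-- The supremum distance between two functions `X → ℝ`. -/
noncomputable def supD {X : Type*} (φ ψ : X → ℝ) : ℝ :=
  ⨆ x : X, |φ x - ψ x|

section Helpers

variable {Z : Type*} [MetricSpace Z]

lemma katExt_self {S : Finset Z} (hS : S.Nonempty) {f : Z → ℝ} (hf : KatetovOn S f)
    {t : Z} (ht : t ∈ S) : katExt S hS f t = f t := by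
  apply le_antisymm
  · calc katExt S hS f t ≤ f t + dist t t := Finset.inf'_le _ ht
      _ = f t := by simp
  · apply Finset.le_inf'
    intro s hs
    have h1 := abs_le.mp (hf t ht s hs).1
    have := dist_comm t s
    linarith [h1.2]

lemma katExt_lip {S : Finset Z} (hS : S.Nonempty) (f : Z → ℝ) (x y : Z) :
    katExt S hS f x ≤ katExt S hS f y + dist y x := by
  obtain ⟨s, hs, heq⟩ := Finset.exists_mem_eq_inf' hS (fun s => f s + dist s y)
  calc katExt S hS f x ≤ f s + dist s x := Finset.inf'_le _ hs
    _ ≤ f s + (dist s y + dist y x) := by linarith [dist_triangle s y x]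
    _ = katExt S hS f y + dist y x := by rw [katExt, heq]; ring

lemma katExt_sub_le {S T : Finset Z} (hS : S.Nonempty) (hT : T.Nonempty)
    (f h : Z → ℝ) (hh : KatetovOn T h) (x : Z) :
    katExt S hS f x - katExt T hT h x ≤
      T.sup' hT (fun t => katExt S hS f t - katExt T hT h t) := by
  obtain ⟨t, ht, heq⟩ := Finset.exists_mem_eq_inf' hT (fun t => h t + dist t x)
  have h1 : katExt S hS f x ≤ katExt S hS f t + dist t x := katExt_lip hS f x t
  have h2 : katExt T hT h x = h t + dist t x := heq
  have h3 : katExt T hT h t = h t := katExt_self hT hh ht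
  have h4 : katExt S hS f t - katExt T hT h t ≤
      T.sup' hT (fun t => katExt S hS f t - katExt T hT h t) :=
    Finset.le_sup' (fun t => katExt S hS f t - katExt T hT h t) ht
  linarith

lemma katExt_abs_bound {S T : Finset Z} (hS : S.Nonempty) (hT : T.Nonempty)
    {f h : Z → ℝ} (hf : KatetovOn S f) (hh : KatetovOn T h) (x : Z) :
    |katExt S hS f x - katExt T hT h x| ≤
      max (S.sup' hS fun u => |katExt S hS f u - katExt T hT h u|)
          (T.sup' hT fun u => |katExt S hS f u - katExt T hT h u|) := by
  rw [abs_sub_le_iff]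
  constructor
  · calc katExt S hS f x - katExt T hT h x
        ≤ T.sup' hT (fun t => katExt S hS f t - katExt T hT h t) :=
          katExt_sub_le hS hT f h hh x
      _ ≤ T.sup' hT (fun u => |katExt S hS f u - katExt T hT h u|) :=
          Finset.sup'_mono_fun (fun b _ => le_abs_self _)
      _ ≤ _ := le_max_right _ _
  · calc katExt T hT h x - katExt S hS f x
        ≤ S.sup' hS (fun s => katExt T hT h s - katExt S hS f s) :=
          katExt_sub_le hT hS h f hf x
      _ ≤ S.sup' hS (fun u => |katExt S hS f u - katExt T hT h u|) :=
          Finset.sup'_mono_fun (fun b _ => by rw [abs_sub_comm]; exact le_abs_self _)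
      _ ≤ _ := le_max_left _ _

end Helpers

/-- A strongly moving isometric action of `G` on `X` induces, via `g · φ = φ ∘ g⁻¹`, an
isometric action of `G` on the space `X*` of Katetov extensions with the sup metric (which
is finite on `X*`); this action extends the action on `X` (identifying `x ∈ X` with the
function `y ↦ dist x y`, i.e. the Katetov extension of the zero function on `{x}`) and is
strongly moving with the same constant `ε`. -/
theorem statement15 {G X : Type} [Group G] [MetricSpace X]
    (act : G → X → X) (hiso : ∀ g, Isometry (act g))
    (hone : ∀ x, act 1 x = x) (hmul : ∀ g h x, act (g * h) x = act g (act h x))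
    (ε : ℝ) (hε : 0 < ε)
    (hsm : ∀ F : Finset X, ∃ g : G, ∀ a ∈ F, ∀ b ∈ F, ε ≤ dist a (act g b)) :
    -- the sup metric is finite on `X*`
    (∀ φ ∈ KatStar X, ∀ ψ ∈ KatStar X, BddAbove (Set.range fun x => |φ x - ψ x|)) ∧
    -- `g · φ = φ ∘ g⁻¹` maps `X*` to itself
    (∀ (g : G), ∀ φ ∈ KatStar X, (φ ∘ act g⁻¹) ∈ KatStar X) ∧
    -- it is an action
    (∀ φ : X → ℝ, φ ∘ act (1 : G)⁻¹ = φ) ∧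
    (∀ (g h : G) (φ : X → ℝ), φ ∘ act (g * h)⁻¹ = (φ ∘ act h⁻¹) ∘ act g⁻¹) ∧
    -- the action is by isometries of the sup metric
    (∀ (g : G), ∀ φ ∈ KatStar X, ∀ ψ ∈ KatStar X,
      supD (φ ∘ act g⁻¹) (ψ ∘ act g⁻¹) = supD φ ψ) ∧
    -- `X` embeds isometrically and equivariantly into `X*`
    (∀ x : X, (fun y => dist x y) ∈ KatStar X) ∧
    (∀ x y : X, supD (fun z => dist x z) (fun z => dist y z) = dist x y) ∧
    (∀ (g : G) (x : X), (fun y => dist x y) ∘ act g⁻¹ = fun y => dist (act g x) y) ∧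
    -- the action on `X*` is strongly moving with the same constant
    (∀ F : Finset (X → ℝ), ↑F ⊆ KatStar X →
      ∃ g : G, ∀ φ ∈ F, ∀ ψ ∈ F, ε ≤ supD φ (ψ ∘ act g⁻¹)) := by
  classical
  have inv_act : ∀ (g : G) (x : X), act g⁻¹ (act g x) = x := fun g x => by
    rw [← hmul, inv_mul_cancel, hone]
  have act_inv : ∀ (g : G) (x : X), act g (act g⁻¹ x) = x := fun g x => by
    rw [← hmul, mul_inv_cancel, hone]
  have dist_act : ∀ (g : G) (a b : X), dist (act g a) b = dist a (act g⁻¹ b) := by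
    intro g a b
    conv_lhs => rw [← (hiso g⁻¹).dist_eq, inv_act]
  have part1 : ∀ φ ∈ KatStar X, ∀ ψ ∈ KatStar X,
      BddAbove (Set.range fun x => |φ x - ψ x|) := by
    rintro φ ⟨S, hS, f, hf, rfl⟩ ψ ⟨T, hT, f', hf', rfl⟩
    refine ⟨max (S.sup' hS fun u => |katExt S hS f u - katExt T hT f' u|)
              (T.sup' hT fun u => |katExt S hS f u - katExt T hT f' u|), ?_⟩
    rintro r ⟨x, rfl⟩
    exact katExt_abs_bound hS hT hf hf' x
  have part2 : ∀ (g : G), ∀ φ ∈ KatStar X, (φ ∘ act g⁻¹) ∈ KatStar X := by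
    rintro g φ ⟨S, hS, f, hf, rfl⟩
    refine ⟨S.image (act g), hS.image _, fun x => f (act g⁻¹ x), ?_, ?_⟩
    · intro x hx y hy
      simp only [Finset.mem_image] at hx hy
      obtain ⟨s, hs, rfl⟩ := hx
      obtain ⟨t, ht, rfl⟩ := hy
      simp only [inv_act, (hiso g).dist_eq]
      exact hf s hs t ht
    · funext x
      simp only [Function.comp_apply, katExt]
      rw [Finset.inf'_image]
      apply Finset.inf'_congr _ rfl
      intro s hs
      simp only [Function.comp_apply]
      rw [inv_act, dist_act]
  have embed : ∀ x : X, (fun y => dist x y) ∈ KatStar X := by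
    intro x
    refine ⟨{x}, Finset.singleton_nonempty x, fun _ => 0, ?_, ?_⟩
    · intro a ha b hb
      simp only [Finset.mem_singleton] at ha hb
      subst ha; subst hb
      simp
    · funext y
      simp [katExt]
  refine ⟨part1, part2, ?_, ?_, ?_, embed, ?_, ?_, ?_⟩
  · intro φ
    funext x
    simp [inv_one, hone]
  · intro g h φ
    funext x
    simp only [Function.comp_apply]
    rw [mul_inv_rev, hmul]
  · -- isometry
    intro g φ _ ψ _
    have hsurj : Function.Surjective (act g⁻¹) := fun x => ⟨act g x, inv_act g x⟩
    simp only [supD]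
    rw [← sSup_range, ← sSup_range]
    congr 1
    have : (fun x => |(φ ∘ act g⁻¹) x - (ψ ∘ act g⁻¹) x|)
        = (fun y => |φ y - ψ y|) ∘ (act g⁻¹) := rfl
    rw [this, Set.range_comp, hsurj.range_eq, Set.image_univ]
  · -- isometric embedding
    intro x y
    have : Nonempty X := ⟨x⟩
    have bdd : BddAbove (Set.range fun z => |dist x z - dist y z|) :=
      ⟨dist x y, by rintro r ⟨z, rfl⟩; exact abs_dist_sub_le x y z⟩
    simp only [supD]
    apply le_antisymm
    · exact ciSup_le fun z => abs_dist_sub_le x y z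
    · have := le_ciSup bdd y
      simpa using this
  · -- equivariance
    intro g x
    funext y
    simp only [Function.comp_apply]
    exact (dist_act g x y).symm
  · -- strongly moving
    intro F hF
    have hch : ∀ φ : X → ℝ, ∃ S : Finset X, φ ∈ F →
        ∃ hS : S.Nonempty, ∃ f, KatetovOn S f ∧ φ = katExt S hS f := by
      intro φ
      by_cases h : φ ∈ F
      · obtain ⟨S, hS, f, hf, hφ⟩ := hF h
        exact ⟨S, fun _ => ⟨hS, f, hf, hφ⟩⟩
      · exact ⟨∅, fun hc => absurd hc h⟩
    choose Sof hSof using hch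
    obtain ⟨g, hg⟩ := hsm (F.biUnion Sof)
    refine ⟨g, ?_⟩
    intro φ hφ ψ hψ
    obtain ⟨hSne, f, hf, hφeq⟩ := hSof φ hφ
    obtain ⟨hTne, h', hh', hψeq⟩ := hSof ψ hψ
    have hSsub : ∀ s ∈ Sof φ, s ∈ F.biUnion Sof :=
      fun s hs => Finset.mem_biUnion.mpr ⟨φ, hφ, hs⟩
    have hTsub : ∀ t ∈ Sof ψ, t ∈ F.biUnion Sof :=
      fun t ht => Finset.mem_biUnion.mpr ⟨ψ, hψ, ht⟩
    have hψ'K : (ψ ∘ act g⁻¹) ∈ KatStar X := part2 g ψ ⟨_, hTne, h', hh', hψeq⟩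
    have hφK : φ ∈ KatStar X := ⟨_, hSne, f, hf, hφeq⟩
    have bdd : BddAbove (Set.range fun x => |φ x - (ψ ∘ act g⁻¹) x|) :=
      part1 φ hφK _ hψ'K
    obtain ⟨s₀, hs₀, hs₀min⟩ := Finset.exists_min_image (Sof φ) f hSne
    obtain ⟨t₀, ht₀, ht₀min⟩ := Finset.exists_min_image (Sof ψ) h' hTne
    have key : ∃ x : X, ε ≤ |φ x - (ψ ∘ act g⁻¹) x| := by
      by_cases hc : f s₀ ≤ h' t₀
      · refine ⟨s₀, ?_⟩
        have e1 : φ s₀ = f s₀ := by rw [hφeq]; exact katExt_self _ hf hs₀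
        have e2 : h' t₀ + ε ≤ (ψ ∘ act g⁻¹) s₀ := by
          simp only [Function.comp_apply]
          rw [hψeq]
          apply Finset.le_inf'
          intro t ht
          have hd : ε ≤ dist s₀ (act g t) := hg s₀ (hSsub s₀ hs₀) t (hTsub t ht)
          have hd2 : dist t (act g⁻¹ s₀) = dist s₀ (act g t) := by
            rw [← dist_act, dist_comm]
          have := ht₀min t ht
          linarith [hd2 ▸ hd]
        rw [abs_sub_comm]
        have : ε ≤ (ψ ∘ act g⁻¹) s₀ - φ s₀ := by
          simp only [Function.comp_apply] at e2 ⊢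
          rw [e1]; linarith
        exact le_trans this (le_abs_self _)
      · refine ⟨act g t₀, ?_⟩
        push_neg at hc
        have e1 : (ψ ∘ act g⁻¹) (act g t₀) = h' t₀ := by
          simp only [Function.comp_apply, inv_act]
          rw [hψeq]; exact katExt_self _ hh' ht₀
        have e2 : f s₀ + ε ≤ φ (act g t₀) := by
          rw [hφeq]
          apply Finset.le_inf'
          intro s hs
          have hd : ε ≤ dist s (act g t₀) := hg s (hSsub s hs) t₀ (hTsub t₀ ht₀)
          have := hs₀min s hs
          linarith
        have : ε ≤ φ (act g t₀) - (ψ ∘ act g⁻¹) (act g t₀) := by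
          rw [e1]; linarith
        exact le_trans this (le_abs_self _)
    obtain ⟨x, hx⟩ := key
    exact le_trans hx (le_ciSup bdd x)
end
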